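/- Let (Ω, ℱ, P) be a probability space and let U : (0,∞) → ℝ be continuously differentiable, strictly increasing and strictly concave, with U'(0+) = +∞, U'(∞) = 0 and limsup_{x→∞} x U'(x)/U(x) < 1; extend U to 0 by U(0) = lim_{x↓0} U(x) ∈ [−∞, ∞). Let D be a convex set of nonnegative random variables such that E[U(W)] is well-defined in [−∞, +∞] for every W ∈ D, let α > 0 with U(α) > −∞, and let V* ∈ D satisfy E[U(V*)] = sup_{W∈D} E[U(W)] < ∞. Then for every nonnegative random variable V with V + α ∈ D one has E[V · U'(V*)] ≤ E[U(V*)] − U(α) < ∞. -/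

import Mathlib

open MeasureTheory Set Filter Topology ENNReal

/-- The positive part of an extended real number, as an element of `ℝ≥0∞`. -/
noncomputable def erealPosPart (x : EReal) : ℝ≥0∞ :=
  if x = ⊤ then ⊤ else ENNReal.ofReal x.toReal

/-- The utility function `U : (0,∞) → ℝ` extended to `0` by the (possibly infinite)
value `U₀ ∈ [−∞, ∞)`. -/
noncomputable def utilAt (U : ℝ → ℝ) (U₀ : EReal) (x : ℝ) : EReal :=
  if x = 0 then U₀ else (U x : EReal)

/-- The expected utility `E[U(W)] ∈ [−∞, +∞]` of a nonnegative random variable `W`,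
defined as the difference of the integrals of the positive and negative parts. -/
noncomputable def expUtil {Ω : Type*} [MeasurableSpace Ω] (P : Measure Ω)
    (U : ℝ → ℝ) (U₀ : EReal) (W : Ω → ℝ) : EReal :=
  ((∫⁻ ω, erealPosPart (utilAt U U₀ (W ω)) ∂P : ℝ≥0∞) : EReal)
    - ((∫⁻ ω, erealPosPart (-(utilAt U U₀ (W ω))) ∂P : ℝ≥0∞) : EReal)

/-- `E[U(W)]` is well-defined in `[−∞, +∞]`: the positive part or the negative part of
`U(W)` has finite integral. -/
def ExpUtilWellDef {Ω : Type*} [MeasurableSpace Ω] (P : Measure Ω)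
    (U : ℝ → ℝ) (U₀ : EReal) (W : Ω → ℝ) : Prop :=
  (∫⁻ ω, erealPosPart (utilAt U U₀ (W ω)) ∂P) ≠ ⊤
    ∨ (∫⁻ ω, erealPosPart (-(utilAt U U₀ (W ω))) ∂P) ≠ ⊤

section Aux

variable {U U' : ℝ → ℝ}

lemma aux_slope_pos (hconcave : ConcaveOn ℝ (Set.Ioi 0) U) {x d e : ℝ}
    (hx : 0 < x) (hxd : 0 < x + d) (he : 0 < e) (he1 : e ≤ 1) :
    U (x + d) - U x ≤ (U (x + e * d) - U x) / e := by
  rw [le_div_iff₀ he]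
  have h := hconcave.2 (mem_Ioi.2 hx) (mem_Ioi.2 hxd)
    (show (0:ℝ) ≤ 1 - e by linarith) (show (0:ℝ) ≤ e from he.le) (by ring)

  simp only [smul_eq_mul] at h
  have hpt : (1 - e) * x + e * (x + d) = x + e * d := by ring
  rw [hpt] at h
  nlinarith

lemma aux_slope_zero (hconcave : ConcaveOn ℝ (Set.Ioi 0) U) {c : ℝ}
    (hU0 : Tendsto U (nhdsWithin 0 (Set.Ioi 0)) (nhds c)) {d e : ℝ}
    (hd : 0 < d) (he : 0 < e) (he1 : e ≤ 1) :
    U d - c ≤ (U (e * d) - c) / e := by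
  rw [le_div_iff₀ he]
  have hed : 0 < e * d := mul_pos he hd
  have hedd : e * d ≤ d := by nlinarith
  have key : e * U d + (1 - e) * c ≤ U (e * d) := by
    have hev : ∀ᶠ δ in nhdsWithin 0 (Set.Ioi 0),
        ((d - e * d) / (d - δ)) * U δ + (1 - (d - e * d) / (d - δ)) * U d ≤ U (e * d) := by
      filter_upwards [Ioo_mem_nhdsGT_of_mem (Set.mem_Ico.2 ⟨le_refl (0:ℝ), hed⟩)] with δ hδ
      obtain ⟨hδ0, hδed⟩ := hδ
      have hδd : δ < d := lt_of_lt_of_le hδed hedd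
      have hne : d - δ ≠ 0 := by linarith
      have hθ0 : 0 ≤ (d - e * d) / (d - δ) := div_nonneg (by nlinarith) (by linarith)
      have hθ1 : (d - e * d) / (d - δ) ≤ 1 := by
        rw [div_le_one (by linarith)]; nlinarith
      have h := hconcave.2 (mem_Ioi.2 hδ0) (mem_Ioi.2 hd)
        (show (0:ℝ) ≤ (d - e * d) / (d - δ) from hθ0)
        (show (0:ℝ) ≤ 1 - (d - e * d) / (d - δ) by linarith) (by ring)
      simp only [smul_eq_mul] at h
      have hcancel : (d - e * d) / (d - δ) * (d - δ) = d - e * d := div_mul_cancel₀ _ hne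
      have hpt : (d - e * d) / (d - δ) * δ + (1 - (d - e * d) / (d - δ)) * d = e * d := by
        linear_combination -hcancel
      rw [hpt] at h
      exact h
    have hlim : Tendsto (fun δ => ((d - e * d) / (d - δ)) * U δ
        + (1 - (d - e * d) / (d - δ)) * U d) (nhdsWithin 0 (Set.Ioi 0))
        (nhds (((d - e * d) / d) * c + (1 - (d - e * d) / d) * U d)) := by
      have hθ : Tendsto (fun δ : ℝ => (d - e * d) / (d - δ)) (nhdsWithin 0 (Set.Ioi 0))
          (nhds ((d - e * d) / d)) := by
        have : Tendsto (fun δ : ℝ => (d - e * d) / (d - δ)) (nhds 0) (nhds ((d - e * d) / (d - 0))) := by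
          apply Tendsto.div tendsto_const_nhds (tendsto_const_nhds.sub tendsto_id)
          simpa using hd.ne'
        simpa using this.mono_left nhdsWithin_le_nhds
      exact (hθ.mul hU0).add ((tendsto_const_nhds.sub hθ).mul tendsto_const_nhds)
    have hfin := le_of_tendsto hlim hev
    have h1 : (d - e * d) / d = 1 - e := by field_simp
    rw [h1] at hfin
    ring_nf at hfin ⊢
    nlinarith [hfin]
  nlinarith

lemma aux_mvt (hderiv : ∀ x ∈ Set.Ioi (0:ℝ), HasDerivAt U (U' x) x) {a b M : ℝ}
    (ha : 0 < a) (hab : a < b) (hM : ∀ x ∈ Set.Ioo a b, M ≤ U' x) :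
    M * (b - a) ≤ U b - U a := by
  have hcont : ContinuousOn U (Set.Icc a b) := fun x hx =>
    ((hderiv x (lt_of_lt_of_le ha hx.1)).continuousAt).continuousWithinAt
  have hd : ∀ x ∈ Set.Ioo a b, HasDerivAt U (U' x) x := fun x hx =>
    hderiv x (ha.trans hx.1)
  obtain ⟨ξ, hξ, hslope⟩ := exists_hasDerivAt_eq_slope U U' hab hcont hd
  have h2 := hM ξ hξ
  rw [hslope] at h2
  rw [le_div_iff₀ (by linarith)] at h2
  linarith

lemma aux_gradient (hderiv : ∀ x ∈ Set.Ioi (0:ℝ), HasDerivAt U (U' x) x)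
    (hconc : StrictConcaveOn ℝ (Set.Ioi 0) U) {x a : ℝ}
    (ha : 0 < a) (hx : 0 < x) : (x - a) * U' x ≤ U x - U a := by
  rcases lt_trichotomy x a with h | rfl | h
  · have h2 := hconc.slope_lt_of_hasDerivAt (mem_Ioi.2 hx) (mem_Ioi.2 ha) h
      (hderiv x (mem_Ioi.2 hx))
    rw [slope_def_field, div_lt_iff₀ (by linarith)] at h2
    nlinarith
  · simp
  · have h2 := hconc.lt_slope_of_hasDerivAt (mem_Ioi.2 ha) (mem_Ioi.2 hx) h
      (hderiv x (mem_Ioi.2 hx))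
    rw [slope_def_field, lt_div_iff₀ (by linarith)] at h2
    nlinarith

lemma aux_derivlim (hderiv : ∀ x ∈ Set.Ioi (0:ℝ), HasDerivAt U (U' x) x) {x d : ℝ}
    (hx : 0 < x) :
    Tendsto (fun n : ℕ => (U (x + 1 / ((n:ℝ) + 1) * d) - U x) * ((n:ℝ) + 1)) atTop
      (nhds (d * U' x)) := by
  have h1 : HasDerivAt (fun t : ℝ => x + t * d) d 0 := by
    simpa using ((hasDerivAt_id (0:ℝ)).mul_const d).const_add x
  have h2 : HasDerivAt (fun t : ℝ => U (x + t * d)) (U' x * d) 0 := by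
    have hU : HasDerivAt U (U' x) ((fun t : ℝ => x + t * d) 0) := by
      simpa using hderiv x (mem_Ioi.2 hx)
    exact hU.comp 0 h1
  have h3 := hasDerivAt_iff_tendsto_slope.mp h2
  have h4 : Tendsto (fun n : ℕ => 1 / ((n:ℝ) + 1)) atTop (nhdsWithin 0 {(0:ℝ)}ᶜ) := by
    apply tendsto_nhdsWithin_of_tendsto_nhds_of_eventually_within
    · exact tendsto_one_div_add_atTop_nhds_zero_nat
    · exact Eventually.of_forall fun n =>
        Set.mem_compl_singleton_iff.mpr (by positivity)
  have h5 := h3.comp h4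
  have heq : (fun n : ℕ => (U (x + 1 / ((n:ℝ) + 1) * d) - U x) * ((n:ℝ) + 1)) =
      (slope (fun t : ℝ => U (x + t * d)) 0) ∘ (fun n : ℕ => 1 / ((n:ℝ) + 1)) := by
    funext n
    simp only [Function.comp_apply, slope_def_field, sub_zero, zero_mul, add_zero, one_div, div_eq_mul_inv, inv_inv, one_mul]
  rw [heq, mul_comm d]
  exact h5

lemma aux_inada (hderiv : ∀ x ∈ Set.Ioi (0:ℝ), HasDerivAt U (U' x) x) {c d : ℝ}
    (hU0 : Tendsto U (nhdsWithin 0 (Set.Ioi 0)) (nhds c))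
    (hInada : Tendsto U' (nhdsWithin 0 (Set.Ioi 0)) atTop) (hd : 0 < d) :
    Tendsto (fun n : ℕ => (U (1 / ((n:ℝ) + 1) * d) - c) * ((n:ℝ) + 1)) atTop atTop := by
  rw [tendsto_atTop]
  intro M
  set K := |M| / d + 1 with hKdef
  have hKpos : 0 < K := by positivity
  have hMK : M ≤ K * d := by
    have : K * d = |M| + d := by rw [hKdef]; field_simp
    have := le_abs_self M
    linarith
  obtain ⟨x₀, hx₀pos, hx₀⟩ : ∃ x₀ > 0, ∀ x ∈ Set.Ioo (0:ℝ) x₀, K ≤ U' x := by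
    have h := hInada.eventually (eventually_ge_atTop K)
    obtain ⟨u, hu, husub⟩ := mem_nhdsGT_iff_exists_Ioo_subset.mp h
    exact ⟨u, hu, fun x hx => husub hx⟩
  have hev : ∀ᶠ n : ℕ in atTop, 1 / ((n:ℝ) + 1) * d < x₀ := by
    have ht := tendsto_one_div_add_atTop_nhds_zero_nat.mul_const d
    rw [zero_mul] at ht
    exact ht.eventually (gt_mem_nhds hx₀pos)
  filter_upwards [hev] with n hn
  have hepos : (0:ℝ) < 1 / ((n:ℝ) + 1) := by positivity
  have hed : 0 < 1 / ((n:ℝ) + 1) * d := mul_pos hepos hd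
  have key : K * (1 / ((n:ℝ) + 1) * d) ≤ U (1 / ((n:ℝ) + 1) * d) - c := by
    set ed := 1 / ((n:ℝ) + 1) * d with heddef
    have hev2 : ∀ᶠ δ in nhdsWithin 0 (Set.Ioi 0),
        K * ed + U δ - K * δ ≤ U ed := by
      filter_upwards [Ioo_mem_nhdsGT_of_mem (Set.mem_Ico.2 ⟨le_refl (0:ℝ), hed⟩)] with δ hδ
      have hmvt := aux_mvt hderiv hδ.1 hδ.2
        (fun y hy => hx₀ y ⟨hδ.1.trans hy.1, hy.2.trans hn⟩)
      linarith
    have hlim : Tendsto (fun δ : ℝ => K * ed + U δ - K * δ) (nhdsWithin 0 (Set.Ioi 0))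
        (nhds (K * ed + c - K * 0)) := by
      apply Tendsto.sub (tendsto_const_nhds.add hU0)
      exact (tendsto_const_nhds.mul tendsto_id).mono_left nhdsWithin_le_nhds
    have := le_of_tendsto hlim hev2
    linarith
  have hnp : (0:ℝ) < (n:ℝ) + 1 := by positivity
  have hcalc : K * (1 / ((n:ℝ) + 1) * d) * ((n:ℝ) + 1) = K * d := by field_simp
  have h6 := mul_le_mul_of_nonneg_right key hnp.le
  calc M ≤ K * d := hMK
    _ = K * (1 / ((n:ℝ) + 1) * d) * ((n:ℝ) + 1) := hcalc.symm
    _ ≤ (U (1 / ((n:ℝ) + 1) * d) - c) * ((n:ℝ) + 1) := h6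

end Aux

section MAux

lemma aux_ereal_coe_ennreal {a : ℝ≥0∞} (ha : a ≠ ⊤) : (a : EReal) = ((a.toReal : ℝ) : EReal) := by
  lift a to NNReal using ha
  norm_cast

lemma aux_sub_ne_bot {p q : ℝ≥0∞} (hq : q ≠ ⊤) : ((p : EReal) - (q : EReal)) ≠ ⊥ := by
  rw [aux_ereal_coe_ennreal hq]
  rcases eq_or_ne p ⊤ with rfl | hp
  · rw [EReal.coe_ennreal_top, EReal.top_sub_coe]
    exact top_ne_bot
  · rw [aux_ereal_coe_ennreal hp, ← EReal.coe_sub]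
    exact EReal.coe_ne_bot _

lemma erealPosPart_coe (r : ℝ) : erealPosPart ((r : ℝ) : EReal) = ENNReal.ofReal r := by
  rw [erealPosPart, if_neg (EReal.coe_ne_top r), EReal.toReal_coe]

lemma erealPosPart_neg_coe (r : ℝ) : erealPosPart (-((r : ℝ) : EReal)) = ENNReal.ofReal (-r) := by
  rw [← EReal.coe_neg, erealPosPart_coe]

variable {Ω : Type*} [MeasurableSpace Ω] {P : Measure Ω}

lemma aux_integrable_of_lintegrals {g : Ω → ℝ}
    (hg : Measurable g) (hp : ∫⁻ ω, ENNReal.ofReal (g ω) ∂P ≠ ⊤)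
    (hn : ∫⁻ ω, ENNReal.ofReal (-g ω) ∂P ≠ ⊤) : Integrable g P := by
  refine ⟨hg.aestronglyMeasurable, ?_⟩
  rw [hasFiniteIntegral_iff_norm]
  have heq : ∀ ω, ENNReal.ofReal ‖g ω‖ = ENNReal.ofReal (g ω) + ENNReal.ofReal (-g ω) := by
    intro ω
    rcases le_or_gt 0 (g ω) with h | h
    · rw [Real.norm_eq_abs, abs_of_nonneg h, ENNReal.ofReal_of_nonpos (show -g ω ≤ 0 by linarith), add_zero]
    · rw [Real.norm_eq_abs, abs_of_neg h, ENNReal.ofReal_of_nonpos (show g ω ≤ 0 from h.le), zero_add]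
  simp_rw [heq]
  rw [lintegral_add_left (hg.ennreal_ofReal)]
  exact ENNReal.add_lt_top.2 ⟨hp.lt_top, hn.lt_top⟩

lemma aux_lintegral_sub_eq_integral {g : Ω → ℝ}
    (hg : Measurable g) (hp : ∫⁻ ω, ENNReal.ofReal (g ω) ∂P ≠ ⊤)
    (hn : ∫⁻ ω, ENNReal.ofReal (-g ω) ∂P ≠ ⊤) :
    ((∫⁻ ω, ENNReal.ofReal (g ω) ∂P : ℝ≥0∞) : EReal)
      - ((∫⁻ ω, ENNReal.ofReal (-g ω) ∂P : ℝ≥0∞) : EReal) = ((∫ ω, g ω ∂P : ℝ) : EReal) := by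
  rw [aux_ereal_coe_ennreal hp, aux_ereal_coe_ennreal hn, ← EReal.coe_sub,
    integral_eq_lintegral_pos_part_sub_lintegral_neg_part (aux_integrable_of_lintegrals hg hp hn)]

end MAux


/-- Let `U : (0,∞) → ℝ` be continuously differentiable, strictly
increasing and strictly concave, with `U'(0+) = +∞`, `U'(∞) = 0` and
`limsup_{x→∞} x U'(x)/U(x) < 1`; extend `U` to `0` by `U(0) = lim_{x↓0} U(x) ∈ [−∞, ∞)`.
Let `D` be a convex set of nonnegative random variables with well-defined expected
utilities, let `α > 0` with `U(α) > −∞`, and let `V* ∈ D` satisfy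
`E[U(V*)] = sup_{W ∈ D} E[U(W)] < ∞`. Then for every nonnegative random variable `V`
with `V + α ∈ D` one has `E[V · U'(V*)] ≤ E[U(V*)] − U(α) < ∞`. -/
theorem dual_bound_at_optimum
    {Ω : Type*} [MeasurableSpace Ω] (P : Measure Ω) [IsProbabilityMeasure P]
    (U U' : ℝ → ℝ) (U₀ : EReal)
    (hderiv : ∀ x ∈ Set.Ioi (0 : ℝ), HasDerivAt U (U' x) x)
    (hU'cont : ContinuousOn U' (Set.Ioi 0))
    (hmono : StrictMonoOn U (Set.Ioi 0))
    (hconc : StrictConcaveOn ℝ (Set.Ioi 0) U)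
    (hInada₀ : Tendsto U' (nhdsWithin 0 (Set.Ioi 0)) atTop)
    (hInadaTop : Tendsto U' atTop (nhds 0))
    (hRAE : Filter.limsup (fun x : ℝ => x * U' x / U x) atTop < 1)
    (hU₀ : Tendsto (fun x : ℝ => (U x : EReal)) (nhdsWithin 0 (Set.Ioi 0)) (nhds U₀))
    (hU₀ne : U₀ ≠ ⊤)
    (D : Set (Ω → ℝ)) (hD : Convex ℝ D)
    (hDmeas : ∀ W ∈ D, Measurable W) (hDnonneg : ∀ W ∈ D, ∀ ω, 0 ≤ W ω)
    (hDwd : ∀ W ∈ D, ExpUtilWellDef P U U₀ W)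
    (α : ℝ) (hα : 0 < α)
    (Vstar : Ω → ℝ) (hVD : Vstar ∈ D)
    (hopt : expUtil P U U₀ Vstar = ⨆ W ∈ D, expUtil P U U₀ W)
    (hfin : expUtil P U U₀ Vstar ≠ ⊤) :
    ∀ V : Ω → ℝ, (∀ ω, 0 ≤ V ω) → (fun ω => V ω + α) ∈ D →
      ((∫⁻ ω, ENNReal.ofReal (V ω * U' (Vstar ω)) ∂P : ℝ≥0∞) : EReal)
        ≤ expUtil P U U₀ Vstar - ((U α : ℝ) : EReal)
      ∧ expUtil P U U₀ Vstar - ((U α : ℝ) : EReal) < ⊤ := by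
    classical
  intro V hVpos hVαD
  -- basic measurability and positivity facts
  have mVα : Measurable (fun ω => V ω + α) := hDmeas _ hVαD
  have mVstar : Measurable Vstar := hDmeas _ hVD
  have hVstar0 : ∀ ω, 0 ≤ Vstar ω := hDnonneg _ hVD
  have mV : Measurable V := by
    have : V = fun ω => (V ω + α) + (-α) := by funext ω; ring
    rw [this]; exact mVα.add_const (-α)
  have contU : ContinuousOn U (Set.Ioi 0) := fun x hx =>
    (hderiv x hx).continuousAt.continuousWithinAt
  have hconcave : ConcaveOn ℝ (Set.Ioi 0) U := hconc.concaveOn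
  have hmonoOn : MonotoneOn U (Set.Ioi 0) := hmono.monotoneOn
  -- measurable extension of U
  set ψ : ℝ → ℝ := fun x => if hx : x ∈ Set.Ioi (0:ℝ) then U x else U₀.toReal with hψdef
  have mψ : Measurable ψ :=
    Measurable.dite (continuousOn_iff_continuous_restrict.mp contU).measurable
      measurable_const measurableSet_Ioi
  have hψ_pos : ∀ x : ℝ, 0 < x → ψ x = U x := fun x hx => dif_pos hx
  have hψ0 : ψ 0 = U₀.toReal := dif_neg (by simp)
  set φ : Ω → ℝ := fun ω => ψ (Vstar ω) with hφdef
  have mφ : Measurable φ := mψ.comp mVstar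
  -- the perturbations
  set dd : Ω → ℝ := fun ω => V ω + α - Vstar ω with hdddef
  have mdd : Measurable dd := (mVα.sub mVstar)
  set W : ℕ → Ω → ℝ := fun n ω => Vstar ω + 1 / ((n:ℝ) + 1) * dd ω with hWdef
  have mW : ∀ n : ℕ, Measurable (W n) := fun n => mVstar.add (mdd.const_mul _)
  have hep : ∀ n : ℕ, (0:ℝ) < 1 / ((n:ℝ) + 1) := fun n => by positivity
  have he1 : ∀ n : ℕ, 1 / ((n:ℝ) + 1) ≤ 1 := fun n => by
    rw [div_le_one (by positivity)]; simp
  have hWge : ∀ (n : ℕ) ω, 1 / ((n:ℝ) + 1) * α ≤ W n ω := by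
    intro n ω
    have h1 := hep n; have h2 := he1 n; have h3 := hVpos ω; have h4 := hVstar0 ω
    simp only [hWdef, hdddef]
    nlinarith
  have hWpos : ∀ (n : ℕ) (ω : Ω), 0 < W n ω := fun n ω =>
    lt_of_lt_of_le (mul_pos (hep n) hα) (hWge n ω)
  have hWD : ∀ n : ℕ, W n ∈ D := by
    intro n
    have h1 : (0:ℝ) ≤ 1 - 1 / ((n:ℝ) + 1) := by linarith [he1 n]
    have h2 : (0:ℝ) ≤ 1 / ((n:ℝ) + 1) := (hep n).le
    have h := hD hVD hVαD h1 h2 (by ring)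
    convert h using 1
    funext ω
    simp only [Pi.add_apply, Pi.smul_apply, smul_eq_mul, hWdef, hdddef]
    ring
  have hW0 : ∀ ω, W 0 ω = V ω + α := by
    intro ω; simp only [hWdef, hdddef]; norm_num
  -- optimality
  have hle : ∀ W' ∈ D, expUtil P U U₀ W' ≤ expUtil P U U₀ Vstar := by
    intro W' hW'
    rw [hopt]
    exact le_iSup₂ (f := fun (W : Ω → ℝ) (_ : W ∈ D) => expUtil P U U₀ W) W' hW'
  have hutilW : ∀ (n : ℕ) ω, utilAt U U₀ (W n ω) = ((U (W n ω) : ℝ) : EReal) :=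
    fun n ω => if_neg (hWpos n ω).ne'
  have hWpos_eq : ∀ n : ℕ, ∫⁻ ω, erealPosPart (utilAt U U₀ (W n ω)) ∂P
      = ∫⁻ ω, ENNReal.ofReal (U (W n ω)) ∂P :=
    fun n => lintegral_congr fun ω => by rw [hutilW n ω, erealPosPart_coe]
  have hWneg_eq : ∀ n : ℕ, ∫⁻ ω, erealPosPart (-(utilAt U U₀ (W n ω))) ∂P
      = ∫⁻ ω, ENNReal.ofReal (-(U (W n ω))) ∂P :=
    fun n => lintegral_congr fun ω => by rw [hutilW n ω, erealPosPart_neg_coe]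
  -- lower bound for U on W n
  have hWlb : ∀ (n : ℕ) ω, U (1 / ((n:ℝ) + 1) * α) ≤ U (W n ω) := fun n ω =>
    hmonoOn (Set.mem_Ioi.2 (mul_pos (hep n) hα)) (Set.mem_Ioi.2 (hWpos n ω)) (hWge n ω)
  have hnegW : ∀ n : ℕ, (∫⁻ ω, ENNReal.ofReal (-(U (W n ω))) ∂P) ≠ ⊤ := by
    intro n
    have hb : ∀ ω, ENNReal.ofReal (-(U (W n ω))) ≤ ENNReal.ofReal (-(U (1 / ((n:ℝ) + 1) * α))) :=
      fun ω => ENNReal.ofReal_le_ofReal (by linarith [hWlb n ω])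
    refine ne_of_lt (lt_of_le_of_lt (lintegral_mono hb) ?_)
    rw [lintegral_const, measure_univ, mul_one]
    exact ENNReal.ofReal_lt_top
  -- expUtil Vstar is not ⊥
  have hbot : expUtil P U U₀ Vstar ≠ ⊥ := by
    have h0 := hle (W 0) (hWD 0)
    have hnb : expUtil P U U₀ (W 0) ≠ ⊥ := by
      rw [expUtil]
      exact aux_sub_ne_bot (by rw [hWneg_eq 0]; exact hnegW 0)
    intro hc
    rw [hc, le_bot_iff] at h0
    exact hnb h0
  -- both parts of the optimum are finite
  have hnegV : (∫⁻ ω, erealPosPart (-(utilAt U U₀ (Vstar ω))) ∂P) ≠ ⊤ := by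
    intro h
    rcases hDwd Vstar hVD with hp | hn
    · apply hbot
      rw [expUtil, h, EReal.coe_ennreal_top, aux_ereal_coe_ennreal hp, EReal.sub_top]
    · exact hn h
  have hposV : (∫⁻ ω, erealPosPart (utilAt U U₀ (Vstar ω)) ∂P) ≠ ⊤ := by
    intro h
    apply hfin
    rw [expUtil, h, EReal.coe_ennreal_top, aux_ereal_coe_ennreal hnegV, EReal.top_sub_coe]
  -- almost everywhere, either Vstar > 0 or U₀ is finite
  have hae_good : ∀ᵐ ω ∂P, 0 < Vstar ω ∨ U₀ ≠ ⊥ := by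
    by_cases hbot0 : U₀ = ⊥
    · have hmeas_s : MeasurableSet {ω | Vstar ω = 0} := mVstar (measurableSet_singleton 0)
      have hnull : P {ω | Vstar ω = 0} = 0 := by
        by_contra hP
        apply hnegV
        have hge : ∀ ω, {ω | Vstar ω = 0}.indicator (fun _ => (⊤:ℝ≥0∞)) ω
            ≤ erealPosPart (-(utilAt U U₀ (Vstar ω))) := by
          intro ω
          by_cases hω : Vstar ω = 0
          · have hmem : ω ∈ {ω | Vstar ω = 0} := hω
            rw [Set.indicator_of_mem hmem, utilAt, if_pos hω, hbot0]
            simp [erealPosPart]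
          · have hmem : ω ∉ {ω | Vstar ω = 0} := hω
            rw [Set.indicator_of_notMem hmem]
            exact zero_le
        have h2 := lintegral_mono (μ := P) hge
        rw [lintegral_indicator_const hmeas_s, ENNReal.top_mul hP] at h2
        exact top_le_iff.mp h2
      have h3 : ∀ᵐ ω ∂P, ¬ (Vstar ω = 0) := by
        rw [ae_iff]; simpa using hnull
      exact h3.mono fun ω h => Or.inl (lt_of_le_of_ne (hVstar0 ω) (Ne.symm h))
    · exact ae_of_all _ fun ω => Or.inr hbot0
  -- a.e. identification of utilAt with φ
  have hφ_pos : ∀ ω, 0 < Vstar ω → φ ω = U (Vstar ω) := fun ω h => by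
    rw [hφdef]; exact hψ_pos _ h
  have hφ_zero : ∀ ω, Vstar ω = 0 → φ ω = U₀.toReal := fun ω h => by
    rw [hφdef]; simp only [h]; exact hψ0
  have hae_util : ∀ᵐ ω ∂P, utilAt U U₀ (Vstar ω) = ((φ ω : ℝ) : EReal) := by
    filter_upwards [hae_good] with ω hω
    rcases (hVstar0 ω).lt_or_eq with h | h
    · rw [utilAt, if_neg h.ne', hφ_pos ω h]
    · have hne : U₀ ≠ ⊥ := by
        rcases hω with h' | h'
        · exact absurd h'.ne' (by rw [← h]; simp)
        · exact h'
      rw [utilAt, if_pos h.symm, hφ_zero ω h.symm]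
      exact (EReal.coe_toReal hU₀ne hne).symm
  have hcongr_pos : ∫⁻ ω, ENNReal.ofReal (φ ω) ∂P
      = ∫⁻ ω, erealPosPart (utilAt U U₀ (Vstar ω)) ∂P := by
    apply lintegral_congr_ae
    filter_upwards [hae_util] with ω h
    rw [h, erealPosPart_coe]
  have hcongr_neg : ∫⁻ ω, ENNReal.ofReal (-(φ ω)) ∂P
      = ∫⁻ ω, erealPosPart (-(utilAt U U₀ (Vstar ω))) ∂P := by
    apply lintegral_congr_ae
    filter_upwards [hae_util] with ω h
    rw [h, erealPosPart_neg_coe]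
  have hposφ : (∫⁻ ω, ENNReal.ofReal (φ ω) ∂P) ≠ ⊤ := by rw [hcongr_pos]; exact hposV
  have hnegφ : (∫⁻ ω, ENNReal.ofReal (-(φ ω)) ∂P) ≠ ⊤ := by rw [hcongr_neg]; exact hnegV
  have hφint : Integrable φ P := aux_integrable_of_lintegrals mφ hposφ hnegφ
  have hEV : expUtil P U U₀ Vstar = ((∫ ω, φ ω ∂P : ℝ) : EReal) := by
    rw [expUtil, ← hcongr_pos, ← hcongr_neg]
    exact aux_lintegral_sub_eq_integral mφ hposφ hnegφ
  -- integrability of U ∘ W n and the optimality inequality in ℝ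
  have mUW : ∀ n : ℕ, Measurable (fun ω => U (W n ω)) := by
    intro n
    have : (fun ω => U (W n ω)) = fun ω => ψ (W n ω) :=
      funext fun ω => (hψ_pos _ (hWpos n ω)).symm
    rw [this]; exact mψ.comp (mW n)
  have hposW : ∀ n : ℕ, (∫⁻ ω, ENNReal.ofReal (U (W n ω)) ∂P) ≠ ⊤ := by
    intro n hcontra
    have h1 : expUtil P U U₀ (W n) = ⊤ := by
      rw [expUtil, hWpos_eq n, hWneg_eq n, hcontra, EReal.coe_ennreal_top,
        aux_ereal_coe_ennreal (hnegW n), EReal.top_sub_coe]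
    have h2 := hle (W n) (hWD n)
    rw [h1, top_le_iff] at h2
    exact hfin h2
  have hUWint : ∀ n : ℕ, Integrable (fun ω => U (W n ω)) P := fun n =>
    aux_integrable_of_lintegrals (mUW n) (hposW n) (hnegW n)
  have hEW : ∀ n : ℕ, expUtil P U U₀ (W n) = ((∫ ω, U (W n ω) ∂P : ℝ) : EReal) := by
    intro n
    rw [expUtil, hWpos_eq n, hWneg_eq n]
    exact aux_lintegral_sub_eq_integral (mUW n) (hposW n) (hnegW n)
  have hIle : ∀ n : ℕ, ∫ ω, U (W n ω) ∂P ≤ ∫ ω, φ ω ∂P := by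
    intro n
    have h := hle (W n) (hWD n)
    rw [hEW n, hEV, EReal.coe_le_coe_iff] at h
    exact h
  -- the difference quotients
  set G : ℕ → Ω → ℝ := fun n ω => (U (W n ω) - φ ω) * ((n:ℝ) + 1) with hGdef
  have hGint : ∀ n : ℕ, Integrable (G n) P := fun n => ((hUWint n).sub hφint).mul_const _
  have hGmeas : ∀ n : ℕ, Measurable (G n) := fun n => ((mUW n).sub mφ).mul_const _
  have hIG : ∀ n : ℕ, ∫ ω, G n ω ∂P = (∫ ω, U (W n ω) ∂P - ∫ ω, φ ω ∂P) * ((n:ℝ) + 1) := by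
    intro n
    rw [hGdef]
    rw [integral_mul_const, integral_sub (hUWint n) hφint]
  have hGle : ∀ n : ℕ, ∫ ω, G n ω ∂P ≤ 0 := by
    intro n
    rw [hIG n]
    have h1 := hIle n
    have h2 : (0:ℝ) < (n:ℝ) + 1 := by positivity
    nlinarith
  -- monotonicity of the difference quotients
  have hmono_G : ∀ᵐ ω ∂P, ∀ n, G 0 ω ≤ G n ω := by
    filter_upwards [hae_good] with ω hω n
    have hdiv : ∀ r : ℝ, r / (1 / ((n:ℝ) + 1)) = r * ((n:ℝ) + 1) := by
      intro r; field_simp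
    rcases (hVstar0 ω).lt_or_eq with hx | hx
    · have hxd : 0 < Vstar ω + dd ω := by
        simp only [hdddef]; have := hVpos ω; linarith
      have key := aux_slope_pos hconcave hx hxd (hep n) (he1 n)
      have hφx := hφ_pos ω hx
      have hW0ω : W 0 ω = Vstar ω + dd ω := by simp only [hWdef]; norm_num
      have hWnω : W n ω = Vstar ω + 1 / ((n:ℝ) + 1) * dd ω := rfl
      calc G 0 ω = U (Vstar ω + dd ω) - U (Vstar ω) := by
            rw [hGdef]; simp only [hW0ω, hφx, Nat.cast_zero]; ring
        _ ≤ (U (Vstar ω + 1 / ((n:ℝ) + 1) * dd ω) - U (Vstar ω)) / (1 / ((n:ℝ) + 1)) := key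
        _ = G n ω := by
            simp only [hGdef, hWdef]
            rw [hφx] at *
            rw [hdiv]
    · have hne : U₀ ≠ ⊥ := by
        rcases hω with h' | h'
        · exact absurd h'.ne' (by rw [← hx]; simp)
        · exact h'
      have hcT : Tendsto U (nhdsWithin 0 (Set.Ioi 0)) (nhds U₀.toReal) := by
        have h2 := hU₀
        rw [show U₀ = ((U₀.toReal : ℝ) : EReal) from (EReal.coe_toReal hU₀ne hne).symm] at h2
        exact EReal.tendsto_coe.mp h2
      have hd : 0 < dd ω := by
        simp only [hdddef, ← hx]; have := hVpos ω; linarith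
      have key := aux_slope_zero hconcave hcT hd (hep n) (he1 n)
      have hφ0 := hφ_zero ω hx.symm
      have hW0ω : W 0 ω = dd ω := by simp only [hWdef, ← hx]; norm_num
      have hWnω : W n ω = 1 / ((n:ℝ) + 1) * dd ω := by simp only [hWdef, ← hx]; ring
      calc G 0 ω = U (dd ω) - U₀.toReal := by
            rw [hGdef]; simp only [hW0ω, hφ0, Nat.cast_zero]; ring
        _ ≤ (U (1 / ((n:ℝ) + 1) * dd ω) - U₀.toReal) / (1 / ((n:ℝ) + 1)) := key
        _ = G n ω := by
            simp only [hGdef, hWdef, ← hx]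
            rw [hφ0] at *
            rw [hdiv]
            norm_num
  -- the Fatou bound
  set H : ℕ → Ω → ℝ≥0∞ := fun n ω => ENNReal.ofReal (G n ω - G 0 ω) with hHdef
  have hHmeas : ∀ n : ℕ, Measurable (H n) := fun n => ((hGmeas n).sub (hGmeas 0)).ennreal_ofReal
  set K : ℝ≥0∞ := ENNReal.ofReal (- ∫ ω, G 0 ω ∂P) with hKdef
  have hHint_le : ∀ n : ℕ, ∫⁻ ω, H n ω ∂P ≤ K := by
    intro n
    have hint : Integrable (fun ω => G n ω - G 0 ω) P := (hGint n).sub (hGint 0)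
    have hnn : 0 ≤ᵐ[P] fun ω => G n ω - G 0 ω :=
      hmono_G.mono fun ω h => sub_nonneg.2 (h n)
    rw [hHdef, ← ofReal_integral_eq_lintegral_ofReal hint hnn, hKdef]
    apply ENNReal.ofReal_le_ofReal
    rw [integral_sub (hGint n) (hGint 0)]
    linarith [hGle n]
  have hFatou : ∫⁻ ω, Filter.liminf (fun n => H n ω) atTop ∂P ≤ K := by
    refine le_trans (lintegral_liminf_le hHmeas) ?_
    refine le_trans (Filter.liminf_le_liminf (Eventually.of_forall hHint_le)) ?_
    simp [Filter.liminf_const]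
  -- pointwise limits
  have hlims : ∀ᵐ ω ∂P,
      (0 < Vstar ω → Filter.liminf (fun n => H n ω) atTop
        = ENNReal.ofReal (dd ω * U' (Vstar ω) - G 0 ω))
      ∧ (Vstar ω = 0 → Filter.liminf (fun n => H n ω) atTop = ⊤) := by
    filter_upwards [hae_good] with ω hω
    constructor
    · intro hx
      have hT := aux_derivlim hderiv (U' := U') hx (d := dd ω)
      have hφx := hφ_pos ω hx
      have hGn : (fun n : ℕ => G n ω)
          = fun n : ℕ => (U (Vstar ω + 1 / ((n:ℝ) + 1) * dd ω) - U (Vstar ω)) * ((n:ℝ) + 1) := by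
        funext n
        simp only [hGdef, hWdef]
        rw [hφx]
      have h2 : Tendsto (fun n => H n ω) atTop
          (nhds (ENNReal.ofReal (dd ω * U' (Vstar ω) - G 0 ω))) := by
        simp only [hHdef]
        exact (ENNReal.continuous_ofReal.tendsto _).comp ((hGn ▸ hT).sub_const (G 0 ω))
      exact h2.liminf_eq
    · intro hx
      have hne : U₀ ≠ ⊥ := by
        rcases hω with h' | h'
        · exact absurd h'.ne' (by rw [hx]; simp)
        · exact h'
      have hcT : Tendsto U (nhdsWithin 0 (Set.Ioi 0)) (nhds U₀.toReal) := by
        have h2 := hU₀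
        rw [show U₀ = ((U₀.toReal : ℝ) : EReal) from (EReal.coe_toReal hU₀ne hne).symm] at h2
        exact EReal.tendsto_coe.mp h2
      have hd : 0 < dd ω := by
        simp only [hdddef, hx]; have := hVpos ω; linarith
      have hT := aux_inada hderiv (U' := U') hcT hInada₀ hd
      have hφ0 := hφ_zero ω hx
      have hGn : (fun n : ℕ => G n ω)
          = fun n : ℕ => (U (1 / ((n:ℝ) + 1) * dd ω) - U₀.toReal) * ((n:ℝ) + 1) := by
        funext n
        simp only [hGdef, hWdef, hx]
        rw [hφ0]
        norm_num
      have h3 : Tendsto (fun n => G n ω - G 0 ω) atTop atTop := by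
        have heq2 : (fun n : ℕ => G n ω - G 0 ω)
            = fun n : ℕ => (U (1 / ((n:ℝ) + 1) * dd ω) - U₀.toReal) * ((n:ℝ) + 1) + -(G 0 ω) := by
          funext n
          rw [← congrFun hGn n]
          ring
        rw [heq2]
        exact tendsto_atTop_add_const_right _ _ hT
      have h2 : Tendsto (fun n => H n ω) atTop (nhds ⊤) := by
        simp only [hHdef]
        exact ENNReal.tendsto_ofReal_atTop.comp h3
      exact h2.liminf_eq
  -- Vstar is a.e. positive
  have hKlt : K < ⊤ := ENNReal.ofReal_lt_top
  have hliminf_lt : ∀ᵐ ω ∂P, Filter.liminf (fun n => H n ω) atTop < ⊤ :=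
    ae_lt_top (Measurable.liminf hHmeas) (ne_of_lt (lt_of_le_of_lt hFatou hKlt))
  have haepos : ∀ᵐ ω ∂P, 0 < Vstar ω := by
    filter_upwards [hlims, hliminf_lt] with ω h1 h2
    rcases (hVstar0 ω).lt_or_eq with h | h
    · exact h
    · rw [h1.2 h.symm] at h2
      exact absurd rfl h2.ne
  -- pointwise final bound
  have hptwise : ∀ᵐ ω ∂P, ENNReal.ofReal (V ω * U' (Vstar ω))
      ≤ Filter.liminf (fun n => H n ω) atTop + ENNReal.ofReal (U (W 0 ω) - U α) := by
    filter_upwards [hlims, haepos] with ω h1 hx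
    rw [h1.1 hx]
    have hgrad := aux_gradient hderiv hconc hα hx
    have hφx := hφ_pos ω hx
    have hG0 : G 0 ω = U (W 0 ω) - U (Vstar ω) := by
      simp only [hGdef]
      rw [hφx]
      norm_num
    have hsplit : V ω * U' (Vstar ω)
        ≤ (dd ω * U' (Vstar ω) - G 0 ω) + (U (W 0 ω) - U α) := by
      have hdd2 : dd ω = V ω + α - Vstar ω := rfl
      rw [hG0, hdd2]
      nlinarith [hgrad]
    calc ENNReal.ofReal (V ω * U' (Vstar ω))
        ≤ ENNReal.ofReal ((dd ω * U' (Vstar ω) - G 0 ω) + (U (W 0 ω) - U α)) :=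
          ENNReal.ofReal_le_ofReal hsplit
      _ ≤ _ := ENNReal.ofReal_add_le
  -- integrate the final bound
  have hW0lb : ∀ ω, U α ≤ U (W 0 ω) := by
    intro ω
    have := hWlb 0 ω
    norm_num at this
    exact this
  have hint2 : Integrable (fun ω => U (W 0 ω) - U α) P := (hUWint 0).sub (integrable_const _)
  have hnn2 : 0 ≤ᵐ[P] fun ω => U (W 0 ω) - U α :=
    ae_of_all _ fun ω => sub_nonneg.2 (hW0lb ω)
  have hmain : ∫⁻ ω, ENNReal.ofReal (V ω * U' (Vstar ω)) ∂P
      ≤ K + ENNReal.ofReal (∫ ω, (U (W 0 ω) - U α) ∂P) := by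
    calc ∫⁻ ω, ENNReal.ofReal (V ω * U' (Vstar ω)) ∂P
        ≤ ∫⁻ ω, (Filter.liminf (fun n => H n ω) atTop
            + ENNReal.ofReal (U (W 0 ω) - U α)) ∂P := lintegral_mono_ae hptwise
      _ = (∫⁻ ω, Filter.liminf (fun n => H n ω) atTop ∂P)
            + ∫⁻ ω, ENNReal.ofReal (U (W 0 ω) - U α) ∂P :=
          lintegral_add_left (Measurable.liminf hHmeas) _
      _ ≤ K + ENNReal.ofReal (∫ ω, (U (W 0 ω) - U α) ∂P) := by
          refine add_le_add hFatou (le_of_eq ?_)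
          exact (ofReal_integral_eq_lintegral_ofReal hint2 hnn2).symm
  -- identify the constant
  have hIG0 : ∫ ω, G 0 ω ∂P = ∫ ω, U (W 0 ω) ∂P - ∫ ω, φ ω ∂P := by
    rw [hIG 0]
    norm_num
  have hIW0_ge : U α ≤ ∫ ω, U (W 0 ω) ∂P := by
    have h1 : U α = ∫ _ω, U α ∂P := by rw [integral_const, probReal_univ]; simp
    rw [h1]
    exact integral_mono (integrable_const _) (hUWint 0) hW0lb
  have hIsub : ∫ ω, (U (W 0 ω) - U α) ∂P = ∫ ω, U (W 0 ω) ∂P - U α := by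
    rw [integral_sub (hUWint 0) (integrable_const _), integral_const, probReal_univ]
    simp
  have hsum : K + ENNReal.ofReal (∫ ω, (U (W 0 ω) - U α) ∂P)
      = ENNReal.ofReal (∫ ω, φ ω ∂P - U α) := by
    rw [hKdef, hIsub, hIG0,
      ← ENNReal.ofReal_add (by linarith [hIle 0]) (by linarith [hIW0_ge])]
    congr 1
    ring
  have hfinal : ∫⁻ ω, ENNReal.ofReal (V ω * U' (Vstar ω)) ∂P
      ≤ ENNReal.ofReal (∫ ω, φ ω ∂P - U α) := hsum ▸ hmain
  have hge0 : 0 ≤ ∫ ω, φ ω ∂P - U α := by linarith [hIle 0, hIW0_ge]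
  constructor
  · rw [hEV, ← EReal.coe_sub]
    calc ((∫⁻ ω, ENNReal.ofReal (V ω * U' (Vstar ω)) ∂P : ℝ≥0∞) : EReal)
        ≤ ((ENNReal.ofReal (∫ ω, φ ω ∂P - U α) : ℝ≥0∞) : EReal) :=
          EReal.coe_ennreal_le_coe_ennreal_iff.2 hfinal
      _ ≤ ((∫ ω, φ ω ∂P - U α : ℝ) : EReal) := by
          rw [EReal.coe_ennreal_ofReal, max_eq_left hge0]
  · rw [hEV, ← EReal.coe_sub]
    exact EReal.coe_lt_top _
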